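/- For m ≥ 2 nonnegative reals a₁,...,a_m, there exist angles θ₁,...,θ_m such that |Σᵢ aᵢ·exp(iθᵢ)| = ρ, for every ρ in the interval [r_min, Σᵢ aᵢ], where r_min = min over sign vectors ε ∈ {-1,1}^m of |Σᵢ εᵢaᵢ|. -/

import Mathlib

theorem stmt4 (m : ℕ) (hm : 2 ≤ m) (a : Fin m → ℝ) (ha : ∀ i, 0 ≤ a i) (rmin : ℝ)
    (hrmin : IsLeast {r : ℝ | ∃ ε : Fin m → ℝ,
        (∀ i, ε i = 1 ∨ ε i = -1) ∧ r = |∑ i, ε i * a i|} rmin) :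
    ∀ ρ : ℝ, rmin ≤ ρ → ρ ≤ ∑ i, a i →
      ∃ θ : Fin m → ℝ,
        ‖∑ i, (a i : ℂ) * Complex.exp (θ i * Complex.I)‖ = ρ := by
  intro ρ h1 h2
  obtain ⟨⟨ε, hε, hrmin_eq⟩, -⟩ := hrmin
  set φ : Fin m → ℝ := fun i => if ε i = 1 then 0 else Real.pi with hφ
  set f : ℝ → ℝ := fun t =>
    ‖∑ i, (a i : ℂ) * Complex.exp ((t * φ i : ℝ) * Complex.I)‖ with hf
  have hcont : Continuous f := by
    apply continuous_norm.comp
    apply continuous_finset_sum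
    intro i _
    fun_prop
  have hf0 : f 0 = ∑ i, a i := by
    simp only [hf, zero_mul, Complex.ofReal_zero, Complex.exp_zero, mul_one]
    rw [← Complex.ofReal_sum, Complex.norm_real, Real.norm_eq_abs]
    exact abs_of_nonneg (Finset.sum_nonneg fun i _ => ha i)
  have hf1 : f 1 = rmin := by
    have : ∀ i, (a i : ℂ) * Complex.exp ((1 * φ i : ℝ) * Complex.I)
        = ((ε i * a i : ℝ) : ℂ) := by
      intro i
      rcases hε i with h | h <;>
        norm_num [hφ, h, mul_comm Complex.I, Complex.exp_pi_mul_I]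
    simp only [hf, this]
    rw [← Complex.ofReal_sum, Complex.norm_real, Real.norm_eq_abs, hrmin_eq]
  have : ρ ∈ Set.Icc (f 1) (f 0) := ⟨hf1 ▸ h1, hf0 ▸ h2⟩
  obtain ⟨t, -, ht⟩ := intermediate_value_Icc' (by norm_num : (0:ℝ) ≤ 1)
    hcont.continuousOn this
  exact ⟨fun i => t * φ i, ht⟩
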